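/- (Integer-programming constraint) Let C ⊆ S_n have minimum Ulam distance d, and for a,b ∈ {1,...,n} let X_{b,a} = |{σ ∈ C : σ(b) = a}|. Then for every a ∈ {1,...,n} and every ℓ with 0 ≤ ℓ ≤ n−d, one has Σ_{b=1}^{n} C(b−1, ℓ)·C(n−b, n−d−ℓ)·X_{b,a} ≤ (n−1)!/(d−1)!. -/

import Mathlib

/-- One-line notation of a permutation of `Fin n`. -/
def oneLine {n : ℕ} (σ : Equiv.Perm (Fin n)) : List (Fin n) := List.ofFn σ

/-- Length of a longest common subsequence of the one-line notations of `σ` and `τ`. -/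
noncomputable def lcsLen {n : ℕ} (σ τ : Equiv.Perm (Fin n)) : ℕ :=
  sSup {m | ∃ w : List (Fin n), w.length = m ∧ w.Sublist (oneLine σ) ∧ w.Sublist (oneLine τ)}

/-- The Ulam distance: `d_U(σ,τ) = n - L(σ,τ)`. -/
noncomputable def ulamDist {n : ℕ} (σ τ : Equiv.Perm (Fin n)) : ℕ :=
  n - lcsLen σ τ

section Aux

open List in
theorem IPCaux.sorted_subset_sublist {α : Type*} [LinearOrder α] :
    ∀ {l₂ l₁ : List α}, l₁.Pairwise (· < ·) → l₂.Pairwise (· < ·) → l₁ ⊆ l₂ → l₁ <+ l₂ := by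
  intro l₂
  induction l₂ with
  | nil => intro l₁ _ _ h; rw [List.subset_nil.mp h]
  | cons b t ih =>
    intro l₁ h₁ h₂ h
    cases l₁ with
    | nil => exact List.nil_sublist _
    | cons a s =>
      rcases eq_or_ne a b with rfl | hab
      · refine List.Sublist.cons₂ _ (ih h₁.of_cons h₂.of_cons ?_)
        intro x hx
        have hx2 : x ∈ a :: t := h (List.mem_cons_of_mem _ hx)
        have hax : a < x := (List.pairwise_cons.mp h₁).1 x hx
        rcases List.mem_cons.mp hx2 with rfl | hxt
        · exact absurd hax (lt_irrefl _)
        · exact hxt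
      · have hat : a ∈ t := by
          have := h List.mem_cons_self
          rcases List.mem_cons.mp this with rfl | h' ; · exact absurd rfl hab
          · exact h'
        have hba : b < a := (List.pairwise_cons.mp h₂).1 a hat
        refine List.sublist_cons_of_sublist b (ih h₁ h₂.of_cons ?_)
        intro x hx
        rcases List.mem_cons.mp (h hx) with rfl | hxt
        · rcases List.mem_cons.mp hx with rfl | hxs
          · exact absurd hba (lt_irrefl _)
          · exact absurd (lt_trans hba ((List.pairwise_cons.mp h₁).1 _ hxs)) (lt_irrefl _)
        · exact hxt

theorem IPCaux.sort_decomp {n : ℕ} (S : Finset (Fin n)) (b : Fin n) (hb : b ∈ S) :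
    S.sort (· ≤ ·) =
      (S.filter (fun x => x < b)).sort (· ≤ ·) ++
        b :: (S.filter (fun y => b < y)).sort (· ≤ ·) := by
  set u := (S.filter (fun x => x < b)).sort (· ≤ ·) with hu
  set v := (S.filter (fun y => b < y)).sort (· ≤ ·) with hv
  have humem : ∀ x ∈ u, x ∈ S ∧ x < b := by
    intro x hx; simpa using Finset.mem_filter.mp ((Finset.mem_sort _).mp hx)
  have hvmem : ∀ x ∈ v, x ∈ S ∧ b < x := by
    intro x hx; simpa using Finset.mem_filter.mp ((Finset.mem_sort _).mp hx)
  have hnod : (u ++ b :: v).Nodup := by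
    rw [List.nodup_append']
    refine ⟨Finset.sort_nodup _ _, ?_, ?_⟩
    · rw [List.nodup_cons]
      exact ⟨fun h => absurd (hvmem _ h).2 (lt_irrefl _), Finset.sort_nodup _ _⟩
    · intro x hxu hxv
      rcases List.mem_cons.mp hxv with rfl | hxv
      · exact absurd (humem _ hxu).2 (lt_irrefl _)
      · exact absurd (lt_trans (humem _ hxu).2 (hvmem _ hxv).2) (lt_irrefl _)
  have hsorted : (u ++ b :: v).Pairwise (· ≤ ·) := by
    rw [List.pairwise_append]
    refine ⟨Finset.pairwise_sort _ _, ?_, ?_⟩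
    · rw [List.pairwise_cons]
      exact ⟨fun x hx => le_of_lt (hvmem _ hx).2, Finset.pairwise_sort _ _⟩
    · intro x hx y hy
      rcases List.mem_cons.mp hy with rfl | hy
      · exact le_of_lt (humem _ hx).2
      · exact le_of_lt (lt_trans (humem _ hx).2 (hvmem _ hy).2)
  refine List.Perm.eq_of_pairwise' (Finset.pairwise_sort _ _) hsorted ?_
  refine List.perm_of_nodup_nodup_toFinset_eq (Finset.sort_nodup _ _) hnod ?_
  rw [Finset.sort_toFinset]
  ext x
  simp only [List.toFinset_append, List.toFinset_cons, Finset.mem_union, Finset.mem_insert,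
    hu, hv, Finset.sort_toFinset, Finset.mem_filter]
  rcases lt_trichotomy x b with h | rfl | h
  · constructor
    · intro hx; exact Or.inl ⟨hx, h⟩
    · rintro (⟨hx, -⟩ | rfl | ⟨hx, -⟩) <;> first | exact hx | exact hb
  · constructor
    · intro _; exact Or.inr (Or.inl rfl)
    · intro _; exact hb
  · constructor
    · intro hx; exact Or.inr (Or.inr ⟨hx, h⟩)
    · rintro (⟨hx, -⟩ | rfl | ⟨hx, -⟩) <;> first | exact hx | exact hb

/-- The set of "position sets" for fixed position `b`: `S` contains `b`, has exactly `ℓ`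
elements below `b` and exactly `m` elements above `b`. -/
def IPCaux.Tset {n : ℕ} (b : Fin n) (ℓ m : ℕ) : Finset (Finset (Fin n)) :=
  Finset.univ.filter (fun S : Finset (Fin n) =>
    b ∈ S ∧ (S.filter (fun x => x < b)).card = ℓ ∧ (S.filter (fun y => b < y)).card = m)

theorem IPCaux.card_Tset {n : ℕ} (b : Fin n) (ℓ m : ℕ) :
    (IPCaux.Tset b ℓ m).card = ((b : ℕ).choose ℓ) * ((n - 1 - (b : ℕ)).choose m) := by
  have h1 : ((b : ℕ).choose ℓ) * ((n - 1 - (b : ℕ)).choose m) =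
      (((Finset.Iio b).powersetCard ℓ) ×ˢ ((Finset.Ioi b).powersetCard m)).card := by
    rw [Finset.card_product, Finset.card_powersetCard, Finset.card_powersetCard,
      Fin.card_Iio, Fin.card_Ioi]
  rw [h1, IPCaux.Tset]
  refine Finset.card_nbij' (fun S => (S.filter (fun x => x < b), S.filter (fun y => b < y)))
    (fun p => insert b (p.1 ∪ p.2)) ?_ ?_ ?_ ?_
  · intro S hS
    obtain ⟨hbS, hc1, hc2⟩ := (Finset.mem_filter.mp hS).2
    refine Finset.mem_product.mpr ⟨Finset.mem_powersetCard.mpr ⟨?_, hc1⟩,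
      Finset.mem_powersetCard.mpr ⟨?_, hc2⟩⟩
    · intro x hx; exact Finset.mem_Iio.mpr (Finset.mem_filter.mp hx).2
    · intro x hx; exact Finset.mem_Ioi.mpr (Finset.mem_filter.mp hx).2
  · rintro ⟨A, B⟩ hp
    obtain ⟨hA, hB⟩ := Finset.mem_product.mp hp
    obtain ⟨hA1, hA2⟩ := Finset.mem_powersetCard.mp hA
    obtain ⟨hB1, hB2⟩ := Finset.mem_powersetCard.mp hB
    have hAlt : ∀ x ∈ A, x < b := fun x hx => Finset.mem_Iio.mp (hA1 hx)
    have hBgt : ∀ x ∈ B, b < x := fun x hx => Finset.mem_Ioi.mp (hB1 hx)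
    have hfA : (insert b (A ∪ B)).filter (fun x => x < b) = A := by
      ext x
      simp only [Finset.mem_filter, Finset.mem_insert, Finset.mem_union]
      constructor
      · rintro ⟨rfl | hx | hx, hlt⟩
        · exact absurd hlt (lt_irrefl _)
        · exact hx
        · exact absurd (lt_trans (hBgt x hx) hlt) (lt_irrefl _)
      · intro hx; exact ⟨Or.inr (Or.inl hx), hAlt x hx⟩
    have hfB : (insert b (A ∪ B)).filter (fun y => b < y) = B := by
      ext x
      simp only [Finset.mem_filter, Finset.mem_insert, Finset.mem_union]
      constructor
      · rintro ⟨rfl | hx | hx, hlt⟩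
        · exact absurd hlt (lt_irrefl _)
        · exact absurd (lt_trans (hAlt x hx) hlt) (lt_irrefl _)
        · exact hx
      · intro hx; exact ⟨Or.inr (Or.inr hx), hBgt x hx⟩
    refine Finset.mem_filter.mpr ⟨Finset.mem_univ _, Finset.mem_insert_self _ _, ?_, ?_⟩
    · rw [hfA]; exact hA2
    · rw [hfB]; exact hB2
  · intro S hS
    obtain ⟨hbS, -, -⟩ := (Finset.mem_filter.mp hS).2
    ext x
    simp only [Finset.mem_insert, Finset.mem_union, Finset.mem_filter]
    constructor
    · rintro (rfl | ⟨hx, -⟩ | ⟨hx, -⟩)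
      · exact hbS
      · exact hx
      · exact hx
    · intro hx
      rcases lt_trichotomy x b with h | rfl | h
      · exact Or.inr (Or.inl ⟨hx, h⟩)
      · exact Or.inl rfl
      · exact Or.inr (Or.inr ⟨hx, h⟩)
  · rintro ⟨A, B⟩ hp
    obtain ⟨hA, hB⟩ := Finset.mem_product.mp hp
    obtain ⟨hA1, -⟩ := Finset.mem_powersetCard.mp hA
    obtain ⟨hB1, -⟩ := Finset.mem_powersetCard.mp hB
    have hAlt : ∀ x ∈ A, x < b := fun x hx => Finset.mem_Iio.mp (hA1 hx)
    have hBgt : ∀ x ∈ B, b < x := fun x hx => Finset.mem_Ioi.mp (hB1 hx)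
    have hfA : (insert b (A ∪ B)).filter (fun x => x < b) = A := by
      ext x
      simp only [Finset.mem_filter, Finset.mem_insert, Finset.mem_union]
      constructor
      · rintro ⟨rfl | hx | hx, hlt⟩
        · exact absurd hlt (lt_irrefl _)
        · exact hx
        · exact absurd (lt_trans (hBgt x hx) hlt) (lt_irrefl _)
      · intro hx; exact ⟨Or.inr (Or.inl hx), hAlt x hx⟩
    have hfB : (insert b (A ∪ B)).filter (fun y => b < y) = B := by
      ext x
      simp only [Finset.mem_filter, Finset.mem_insert, Finset.mem_union]
      constructor
      · rintro ⟨rfl | hx | hx, hlt⟩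
        · exact absurd hlt (lt_irrefl _)
        · exact absurd (lt_trans (hAlt x hx) hlt) (lt_irrefl _)
        · exact hx
      · intro hx; exact ⟨Or.inr (Or.inr hx), hBgt x hx⟩
    simp [hfA, hfB]

theorem IPCaux.le_lcsLen {n : ℕ} (σ τ : Equiv.Perm (Fin n)) (w : List (Fin n))
    (h1 : w.Sublist (oneLine σ)) (h2 : w.Sublist (oneLine τ)) : w.length ≤ lcsLen σ τ := by
  refine le_csSup ⟨n, ?_⟩ ⟨w, rfl, h1, h2⟩
  rintro m ⟨w', rfl, hs, -⟩
  have := hs.length_le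
  simpa [oneLine] using this

theorem IPCaux.card_tgt {n m : ℕ} (a : Fin n) :
    (Finset.univ.filter (fun f : Fin m → Fin n =>
        Function.Injective f ∧ ∀ i, f i ≠ a)).card = (n - 1).descFactorial m := by
  rw [← Fintype.card_subtype]
  have e : {f : Fin m → Fin n // Function.Injective f ∧ ∀ i, f i ≠ a} ≃
      (Fin m ↪ {x : Fin n // x ≠ a}) :=
    { toFun := fun f => ⟨fun i => ⟨f.1 i, f.2.2 i⟩,
        fun i j h => f.2.1 (congrArg Subtype.val h)⟩
      invFun := fun g => ⟨fun i => (g i).1,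
        ⟨fun i j h => g.injective (Subtype.ext h), fun i => (g i).2⟩⟩
      left_inv := fun f => rfl
      right_inv := fun g => by ext i; rfl }
  rw [Fintype.card_congr e, Fintype.card_embedding_eq, Fintype.card_fin]
  congr 1
  simp [Fintype.card_subtype_compl]

/-- The reduced word (common-subsequence candidate with the entry `σ b` removed). -/
def IPCaux.wordList {n : ℕ} (b : Fin n) (σ : Equiv.Perm (Fin n)) (S : Finset (Fin n)) :
    List (Fin n) :=
  ((S.filter (fun x => x < b)).sort (· ≤ ·) ++ (S.filter (fun y => b < y)).sort (· ≤ ·)).map σ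

theorem IPCaux.word_decomp {n : ℕ} (b : Fin n) (σ : Equiv.Perm (Fin n)) (S : Finset (Fin n))
    (hb : b ∈ S) :
    (S.sort (· ≤ ·)).map σ =
      ((S.filter (fun x => x < b)).sort (· ≤ ·)).map σ ++
        σ b :: ((S.filter (fun y => b < y)).sort (· ≤ ·)).map σ := by
  rw [IPCaux.sort_decomp S b hb, List.map_append, List.map_cons]

theorem IPCaux.word_sublist {n : ℕ} (σ : Equiv.Perm (Fin n)) (S : Finset (Fin n)) :
    ((S.sort (· ≤ ·)).map σ).Sublist (oneLine σ) := by
  rw [oneLine, List.ofFn_eq_map]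
  refine List.Sublist.map σ ?_
  exact IPCaux.sorted_subset_sublist (List.sortedLT_iff_pairwise.mp (Finset.sortedLT_sort S))
    (List.pairwise_lt_finRange n) (fun x _ => List.mem_finRange x)

end Aux

/-- Integer-programming constraint: for a code `C` of minimum Ulam distance `d`
and `X_{b,a} = |{σ ∈ C : σ(b) = a}|`, for every symbol `a` and every
`0 ≤ ℓ ≤ n - d`,
`∑_b C(b-1,ℓ)·C(n-b, n-d-ℓ)·X_{b,a} ≤ (n-1)!/(d-1)!`
(positions indexed `0,…,n-1`, so `b-1` and `n-b` become `(b:ℕ)` and `n-1-(b:ℕ)`). -/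
theorem integer_programming_constraint {n d : ℕ} (hd1 : 1 ≤ d) (hdn : d ≤ n)
    (C : Finset (Equiv.Perm (Fin n)))
    (hC : ∀ σ ∈ C, ∀ τ ∈ C, σ ≠ τ → d ≤ ulamDist σ τ)
    (a : Fin n) (ℓ : ℕ) (hℓ : ℓ ≤ n - d) :
    ∑ b : Fin n, ((b : ℕ)).choose ℓ * (n - 1 - (b : ℕ)).choose (n - d - ℓ) *
        (C.filter (fun σ => σ b = a)).card ≤
      (n - 1).factorial / (d - 1).factorial := by
  classical
  -- the source finset
  set src : Finset ((_ : Fin n) × Equiv.Perm (Fin n) × Finset (Fin n)) :=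
    Finset.univ.sigma (fun b : Fin n =>
      (C.filter (fun σ => σ b = a)) ×ˢ (IPCaux.Tset b ℓ (n - d - ℓ))) with hsrc
  have hLHS : (∑ b : Fin n, ((b : ℕ)).choose ℓ * (n - 1 - (b : ℕ)).choose (n - d - ℓ) *
      (C.filter (fun σ => σ b = a)).card) = src.card := by
    rw [hsrc, Finset.card_sigma]
    refine Finset.sum_congr rfl fun b _ => ?_
    rw [Finset.card_product, IPCaux.card_Tset, mul_comm]
  rw [hLHS]
  -- the target finset
  set tgt : Finset (Fin (n - d) → Fin n) :=
    Finset.univ.filter (fun f => Function.Injective f ∧ ∀ i, f i ≠ a) with htgt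
  have htgtcard : tgt.card = (n - 1).factorial / (d - 1).factorial := by
    rw [htgt, IPCaux.card_tgt, Nat.descFactorial_eq_div (by omega)]
    have h : n - 1 - (n - d) = d - 1 := by omega
    rw [h]
  rw [← htgtcard]
  -- the map
  set F : ((_ : Fin n) × Equiv.Perm (Fin n) × Finset (Fin n)) → (Fin (n - d) → Fin n) :=
    fun x i => (IPCaux.wordList x.1 x.2.1 x.2.2).getD i a with hF
  -- facts about elements of src
  have hmem : ∀ x ∈ src, x.2.1 ∈ C ∧ x.2.1 x.1 = a ∧ x.1 ∈ x.2.2 ∧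
      (x.2.2.filter (fun y => y < x.1)).card = ℓ ∧
      (x.2.2.filter (fun y => x.1 < y)).card = n - d - ℓ := by
    rintro ⟨b, σ, S⟩ hx
    obtain ⟨-, hx2⟩ := Finset.mem_sigma.mp hx
    obtain ⟨hσ, hS⟩ := Finset.mem_product.mp hx2
    obtain ⟨hσC, hσa⟩ := Finset.mem_filter.mp hσ
    obtain ⟨hbS, hc1, hc2⟩ := (Finset.mem_filter.mp hS).2
    exact ⟨hσC, hσa, hbS, hc1, hc2⟩
  have hlen : ∀ x ∈ src, (IPCaux.wordList x.1 x.2.1 x.2.2).length = n - d := by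
    rintro ⟨b, σ, S⟩ hx
    obtain ⟨-, -, -, hc1, hc2⟩ := hmem _ hx
    simp only [IPCaux.wordList, List.length_map, List.length_append, Finset.length_sort]
    rw [hc1, hc2]; omega
  -- word reconstruction : full word from the reduced word
  have hword : ∀ x ∈ src, (x.2.2.sort (· ≤ ·)).map x.2.1 =
      (IPCaux.wordList x.1 x.2.1 x.2.2).take ℓ ++
        a :: (IPCaux.wordList x.1 x.2.1 x.2.2).drop ℓ := by
    rintro ⟨b, σ, S⟩ hx
    obtain ⟨-, hσa, hbS, hc1, hc2⟩ := hmem _ hx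
    have hu : (((S.filter (fun x => x < b)).sort (· ≤ ·)).map σ).length = ℓ := by
      rw [List.length_map, Finset.length_sort, hc1]
    rw [IPCaux.word_decomp b σ S hbS, hσa]
    have hW : IPCaux.wordList b σ S =
        ((S.filter (fun x => x < b)).sort (· ≤ ·)).map σ ++
          ((S.filter (fun y => b < y)).sort (· ≤ ·)).map σ := by
      rw [IPCaux.wordList, List.map_append]
    rw [hW, ← hu, List.take_left, List.drop_left]
  have hwnodup : ∀ x ∈ src, ((x.2.2.sort (· ≤ ·)).map x.2.1).Nodup := by
    rintro ⟨b, σ, S⟩ -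
    exact (Finset.sort_nodup S _).map σ.injective
  -- a is not an entry of the reduced word, and the reduced word has no duplicates
  have hred : ∀ x ∈ src, (IPCaux.wordList x.1 x.2.1 x.2.2).Nodup ∧
      a ∉ (IPCaux.wordList x.1 x.2.1 x.2.2) := by
    intro x hx
    have h1 := hwnodup _ hx
    rw [hword _ hx] at h1
    set W := IPCaux.wordList x.1 x.2.1 x.2.2 with hWdef
    obtain ⟨h1t, h1c, h1disj⟩ := List.nodup_append'.mp h1
    obtain ⟨hadrop, h1d⟩ := List.nodup_cons.mp h1c
    have hatake : a ∉ W.take ℓ := fun h => h1disj h List.mem_cons_self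
    constructor
    · have h2 : (W.take ℓ ++ W.drop ℓ).Nodup :=
        List.nodup_append'.mpr ⟨h1t, h1d, fun y hy hy' => h1disj hy (List.mem_cons_of_mem _ hy')⟩
      simpa only [List.take_append_drop] using h2
    · intro ha
      have ha' : a ∈ W.take ℓ ++ W.drop ℓ := by rw [List.take_append_drop]; exact ha
      rcases List.mem_append.mp ha' with h | h
      · exact hatake h
      · exact hadrop h
  -- the map sends src into tgt
  have hmaps : ∀ x ∈ src, F x ∈ tgt := by
    intro x hx
    obtain ⟨hWnd, haW⟩ := hred _ hx
    have hL := hlen _ hx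
    have hFi : ∀ i : Fin (n - d), F x i = (IPCaux.wordList x.1 x.2.1 x.2.2)[(i : ℕ)]'(by omega) := by
      intro i
      exact List.getD_eq_getElem _ _ (by omega)
    refine Finset.mem_filter.mpr ⟨Finset.mem_univ _, ?_, ?_⟩
    · intro i j hij
      rw [hFi i, hFi j] at hij
      have := (hWnd.getElem_inj_iff (hi := by omega) (hj := by omega)).mp hij
      exact Fin.ext this
    · intro i hia
      rw [hFi i] at hia
      exact haW (hia ▸ List.getElem_mem _)
  -- the map is injective on src
  have hinj : Set.InjOn F src := by
    intro x₁ hx₁' x₂ hx₂' hF12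
    have hx₁ : x₁ ∈ src := hx₁'
    have hx₂ : x₂ ∈ src := hx₂'
    obtain ⟨hσ₁C, hσ₁a, -, -, -⟩ := hmem _ hx₁
    obtain ⟨hσ₂C, hσ₂a, -, -, -⟩ := hmem _ hx₂
    have hL₁ := hlen _ hx₁
    have hL₂ := hlen _ hx₂
    have hW12 : IPCaux.wordList x₁.1 x₁.2.1 x₁.2.2 = IPCaux.wordList x₂.1 x₂.2.1 x₂.2.2 := by
      refine List.ext_getElem (by rw [hL₁, hL₂]) ?_
      intro i hi1 hi2
      have hi : i < n - d := by rw [hL₁] at hi1; exact hi1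
      have h := congrFun hF12 ⟨i, hi⟩
      rw [hF] at h
      simpa only [List.getD_eq_getElem _ _ hi1, List.getD_eq_getElem _ _ hi2] using h
    have hw12 : (x₁.2.2.sort (· ≤ ·)).map x₁.2.1 = (x₂.2.2.sort (· ≤ ·)).map x₂.2.1 := by
      rw [hword _ hx₁, hword _ hx₂, hW12]
    have hσ : x₁.2.1 = x₂.2.1 := by
      by_contra hne
      have hsub1 : ((x₁.2.2.sort (· ≤ ·)).map x₁.2.1).Sublist (oneLine x₁.2.1) :=
        IPCaux.word_sublist x₁.2.1 x₁.2.2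
      have hsub2 : ((x₁.2.2.sort (· ≤ ·)).map x₁.2.1).Sublist (oneLine x₂.2.1) := by
        rw [hw12]; exact IPCaux.word_sublist x₂.2.1 x₂.2.2
      have hlw : ((x₁.2.2.sort (· ≤ ·)).map x₁.2.1).length = n - d + 1 := by
        rw [hword _ hx₁]
        simp only [List.length_append, List.length_cons, List.length_take, List.length_drop, hL₁]
        omega
      have hlcs := IPCaux.le_lcsLen x₁.2.1 x₂.2.1 _ hsub1 hsub2
      rw [hlw] at hlcs
      have hd : d ≤ ulamDist x₁.2.1 x₂.2.1 := hC x₁.2.1 hσ₁C x₂.2.1 hσ₂C hne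
      rw [ulamDist] at hd
      omega
    have hb : x₁.1 = x₂.1 := by
      have h := hσ₁a.trans hσ₂a.symm
      rw [hσ] at h
      exact x₂.2.1.injective h
    have hS : x₁.2.2 = x₂.2.2 := by
      rw [hσ] at hw12
      have hsort := List.map_injective_iff.mpr x₂.2.1.injective hw12
      rw [← Finset.sort_toFinset x₁.2.2 (· ≤ ·), ← Finset.sort_toFinset x₂.2.2 (· ≤ ·), hsort]
    exact Sigma.ext hb (heq_of_eq (Prod.ext hσ hS))
  exact Finset.card_le_card_of_injOn F hmaps hinj
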